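/- Suppose 0 < ε ≤ 1/9 and 0 < θ ≤ 1/9, and X = (X_k, k ∈ ℤ) is a strictly stationary Markov chain satisfying Condition H(ε,θ). For each positive integer n, let u_n := (1/n)·E[(X_1 + X_2 + ⋯ + X_n)²]. Then u_1 ≤ u_2 ≤ u_3 ≤ ⋯, and lim_{n→∞} u_n = ε·[(2/θ) − 1]. -/

import Mathlib

open MeasureTheory ProbabilityTheory Filter Topology

noncomputable section

/-- A sequence `X = (X_k, k ∈ ℤ)` of real random variables is strictly stationary if for
every `n ≥ 1` and `j ∈ ℤ`, `(X_1, …, X_n)` has the same distribution as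
`(X_{1+j}, …, X_{n+j})`. -/
def IsStrictlyStationary {Ω : Type*} [MeasurableSpace Ω] (P : Measure Ω)
    (X : ℤ → Ω → ℝ) : Prop :=
  ∀ (n : ℕ) (j : ℤ),
    Measure.map (fun ω => fun i : Fin n => X (1 + (i : ℤ)) ω) P =
    Measure.map (fun ω => fun i : Fin n => X (1 + j + (i : ℤ)) ω) P

/-- `X` is a Markov chain: for every `n ∈ ℤ` and Borel set `B`,
`P(X_{n+1} ∈ B | σ(X_k, k ≤ n)) = P(X_{n+1} ∈ B | X_n)` almost surely (expressed via
conditional expectations of indicator functions). -/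
def IsMarkovChain {Ω : Type*} [MeasurableSpace Ω] (P : Measure Ω)
    (X : ℤ → Ω → ℝ) : Prop :=
  ∀ (n : ℤ) (B : Set ℝ), MeasurableSet B →
    (P[(fun ω => Set.indicator B (fun _ => (1 : ℝ)) (X (n + 1) ω)) |
        ⨆ k : {k : ℤ // k ≤ n}, MeasurableSpace.comap (X k) inferInstance])
      =ᵐ[P]
    (P[(fun ω => Set.indicator B (fun _ => (1 : ℝ)) (X (n + 1) ω)) |
        MeasurableSpace.comap (X n) inferInstance])

/-- Condition `H(ε,θ)`: `X` is a strictly stationary Markov chain with state space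
`{−1,0,1}`, marginal distribution `π^{(ε)}`, and one-step transition probabilities given
by the matrix `ℙ^{(ε,θ)}` (with `θ* := θ/(1−ε)`). Conditional probabilities are expressed
via `ProbabilityTheory.cond`. -/
def CondH {Ω : Type*} [MeasurableSpace Ω] (P : Measure Ω) (X : ℤ → Ω → ℝ)
    (ε θ : ℝ) : Prop :=
  IsStrictlyStationary P X ∧ IsMarkovChain P X ∧
  (∀ k, Measurable (X k)) ∧
  (∀ k ω, X k ω ∈ ({-1, 0, 1} : Set ℝ)) ∧
  P {ω | X 0 ω = 0} = ENNReal.ofReal (1 - ε) ∧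
  P {ω | X 0 ω = -1} = ENNReal.ofReal (ε / 2) ∧
  P {ω | X 0 ω = 1} = ENNReal.ofReal (ε / 2) ∧
  ProbabilityTheory.cond P {ω | X 0 ω = 0} {ω | X 1 ω = 0}
      = ENNReal.ofReal (1 - (θ / (1 - ε)) * ε) ∧
  ProbabilityTheory.cond P {ω | X 0 ω = 0} {ω | X 1 ω = -1}
      = ENNReal.ofReal ((θ / (1 - ε)) * ε / 2) ∧
  ProbabilityTheory.cond P {ω | X 0 ω = 0} {ω | X 1 ω = 1}
      = ENNReal.ofReal ((θ / (1 - ε)) * ε / 2) ∧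
  ProbabilityTheory.cond P {ω | X 0 ω = -1} {ω | X 1 ω = -1}
      = ENNReal.ofReal (1 - θ) ∧
  ProbabilityTheory.cond P {ω | X 0 ω = 1} {ω | X 1 ω = 1}
      = ENNReal.ofReal (1 - θ) ∧
  ProbabilityTheory.cond P {ω | X 0 ω = -1} {ω | X 1 ω = 0}
      = ENNReal.ofReal θ ∧
  ProbabilityTheory.cond P {ω | X 0 ω = 1} {ω | X 1 ω = 0}
      = ENNReal.ofReal θ ∧
  ProbabilityTheory.cond P {ω | X 0 ω = -1} {ω | X 1 ω = 1} = 0 ∧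
  ProbabilityTheory.cond P {ω | X 0 ω = 1} {ω | X 1 ω = -1} = 0

set_option linter.unusedSectionVars false
set_option linter.unusedVariables false


section Aux
variable {Ω : Type*} [MeasurableSpace Ω] {P : Measure Ω} [IsProbabilityMeasure P]
  {X : ℤ → Ω → ℝ}

lemma aux_integrable_of_bdd {f : Ω → ℝ} (hf : Measurable f) {C : ℝ} (h : ∀ ω, |f ω| ≤ C) :
    Integrable f P :=
  ⟨hf.aestronglyMeasurable, HasFiniteIntegral.of_bounded (C := C)
    (ae_of_all _ (by simpa [Real.norm_eq_abs] using h))⟩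

lemma aux_abs_le (hval : ∀ k ω, X k ω ∈ ({-1, 0, 1} : Set ℝ)) (k : ℤ) (ω : Ω) :
    |X k ω| ≤ 1 := by
  rcases hval k ω with h | h | h <;> rw [h] <;> norm_num

-- shifted laws agree
lemma aux_map_eq
    (hstat : ∀ (n : ℕ) (j : ℤ),
      Measure.map (fun ω => fun i : Fin n => X (1 + (i : ℤ)) ω) P =
      Measure.map (fun ω => fun i : Fin n => X (1 + j + (i : ℤ)) ω) P)
    (n : ℕ) (j : ℤ) :
    Measure.map (fun ω => fun i : Fin n => X (j + (i : ℤ)) ω) P =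
    Measure.map (fun ω => fun i : Fin n => X (1 + (i : ℤ)) ω) P := by
  have h := hstat n (j - 1)
  have he : (fun ω => fun i : Fin n => X (1 + (j - 1) + (i : ℤ)) ω)
      = fun ω => fun i : Fin n => X (j + (i : ℤ)) ω := by
    funext ω i; congr 1; ring
  rw [he] at h
  exact h.symm

lemma aux_meas_vec (hm : ∀ k, Measurable (X k)) (n : ℕ) (j : ℤ) :
    Measurable (fun ω => fun i : Fin n => X (j + (i : ℤ)) ω) :=
  measurable_pi_lambda _ fun i => hm _

-- product expectations are shift invariant
lemma aux_prod_shift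
    (hstat : ∀ (n : ℕ) (j : ℤ),
      Measure.map (fun ω => fun i : Fin n => X (1 + (i : ℤ)) ω) P =
      Measure.map (fun ω => fun i : Fin n => X (1 + j + (i : ℤ)) ω) P)
    (hm : ∀ k, Measurable (X k)) (j : ℤ) (m : ℕ) :
    ∫ ω, X j ω * X (j + (m : ℤ)) ω ∂P = ∫ ω, X 1 ω * X (1 + (m : ℤ)) ω ∂P := by
  set φ : (Fin (m + 1) → ℝ) → ℝ := fun v => v 0 * v (Fin.last m) with hφdef
  have hφ : Measurable φ := (measurable_pi_apply 0).mul (measurable_pi_apply _)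
  have key : ∀ c : ℤ, ∫ ω, X c ω * X (c + (m : ℤ)) ω ∂P
      = ∫ v, φ v ∂(Measure.map (fun ω => fun i : Fin (m + 1) => X (c + (i : ℤ)) ω) P) := by
    intro c
    rw [integral_map (aux_meas_vec hm (m + 1) c).aemeasurable hφ.aestronglyMeasurable]
    simp [hφdef, Fin.last]
  rw [key j, key 1, aux_map_eq hstat (m + 1) j, aux_map_eq hstat (m + 1) 1]

-- marginal laws agree
lemma aux_marg
    (hstat : ∀ (n : ℕ) (j : ℤ),
      Measure.map (fun ω => fun i : Fin n => X (1 + (i : ℤ)) ω) P =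
      Measure.map (fun ω => fun i : Fin n => X (1 + j + (i : ℤ)) ω) P)
    (hm : ∀ k, Measurable (X k)) (n : ℤ) (a : ℝ) :
    P {ω | X n ω = a} = P {ω | X 0 ω = a} := by
  have key : ∀ c : ℤ, P {ω | X c ω = a}
      = Measure.map (fun ω => fun i : Fin 1 => X (c + (i : ℤ)) ω) P {v | v 0 = a} := by
    intro c
    rw [show {v : Fin 1 → ℝ | v 0 = a} = (fun v : Fin 1 → ℝ => v 0) ⁻¹' {a} from rfl,
      Measure.map_apply (aux_meas_vec hm 1 c)
        ((measurable_pi_apply 0) (measurableSet_singleton a))]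
    congr 1
    ext ω
    simp
  rw [key n, aux_map_eq hstat 1 n, ← aux_map_eq hstat 1 0, ← key 0]

-- pair laws agree
lemma aux_pair
    (hstat : ∀ (n : ℕ) (j : ℤ),
      Measure.map (fun ω => fun i : Fin n => X (1 + (i : ℤ)) ω) P =
      Measure.map (fun ω => fun i : Fin n => X (1 + j + (i : ℤ)) ω) P)
    (hm : ∀ k, Measurable (X k)) (n : ℤ) (a b : ℝ) :
    P ({ω | X n ω = a} ∩ {ω | X (n + 1) ω = b})
      = P ({ω | X 0 ω = a} ∩ {ω | X 1 ω = b}) := by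
  have hS : MeasurableSet {v : Fin 2 → ℝ | v 0 = a ∧ v 1 = b} := by
    have : {v : Fin 2 → ℝ | v 0 = a ∧ v 1 = b}
        = (fun v : Fin 2 → ℝ => v 0) ⁻¹' {a} ∩ (fun v : Fin 2 → ℝ => v 1) ⁻¹' {b} := by
      ext v; simp [Set.mem_inter_iff]
    rw [this]
    exact ((measurable_pi_apply 0) (measurableSet_singleton a)).inter
      ((measurable_pi_apply 1) (measurableSet_singleton b))
  have key : ∀ c : ℤ, P ({ω | X c ω = a} ∩ {ω | X (c + 1) ω = b})
      = Measure.map (fun ω => fun i : Fin 2 => X (c + (i : ℤ)) ω) P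
          {v | v 0 = a ∧ v 1 = b} := by
    intro c
    rw [Measure.map_apply (aux_meas_vec hm 2 c) hS]
    congr 1
    ext ω
    simp [Set.mem_inter_iff]
  rw [key n, aux_map_eq hstat 2 n, ← aux_map_eq hstat 2 0, ← key 0]
  norm_num

end Aux

section Aux2
variable {Ω : Type*} [MeasurableSpace Ω] {P : Measure Ω} [IsProbabilityMeasure P]
  {X : ℤ → Ω → ℝ}

-- P(s ∩ t) from conditional probability
lemma aux_inter_eq {s t : Set Ω} (hs : MeasurableSet s) {c d : ℝ}
    (hcond : ProbabilityTheory.cond P s t = ENNReal.ofReal c)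
    (hPs : P s = ENNReal.ofReal d) (hd : 0 < d) :
    P (s ∩ t) = ENNReal.ofReal d * ENNReal.ofReal c := by
  have hns : P s ≠ 0 := by
    rw [hPs]; simp [ENNReal.ofReal_eq_zero]; linarith
  have hnt : P s ≠ ⊤ := measure_ne_top P s
  have h := ProbabilityTheory.cond_apply hs (μ := P) t
  rw [hcond] at h
  calc P (s ∩ t) = P s * ((P s)⁻¹ * P (s ∩ t)) := by
        rw [← mul_assoc, ENNReal.mul_inv_cancel hns hnt, one_mul]
    _ = ENNReal.ofReal d * ENNReal.ofReal c := by rw [← h, hPs]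

-- the pointwise indicator decomposition of a value in {-1,0,1}
lemma aux_val_cases (hval : ∀ k ω, X k ω ∈ ({-1, 0, 1} : Set ℝ)) (k : ℤ) (ω : Ω) :
    X k ω = -1 ∨ X k ω = 0 ∨ X k ω = 1 := by
  rcases hval k ω with h | h | h
  · exact Or.inl h
  · exact Or.inr (Or.inl h)
  · exact Or.inr (Or.inr h)

-- identification of the conditional expectation given X n
lemma aux_condexp_ind (hm : ∀ k, Measurable (X k))
    (hval : ∀ k ω, X k ω ∈ ({-1, 0, 1} : Set ℝ)) (n : ℤ) (b : ℝ) (h : ℝ → ℝ)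
    (hh : Measurable h)
    (hkey : ∀ a : ℝ, a = -1 ∨ a = 0 ∨ a = 1 →
      h a * (P (X n ⁻¹' {a})).toReal
        = (P (X n ⁻¹' {a} ∩ X (n + 1) ⁻¹' {b})).toReal) :
    (fun ω => h (X n ω)) =ᵐ[P]
      P[(fun ω => Set.indicator {b} (fun _ => (1 : ℝ)) (X (n + 1) ω)) |
          MeasurableSpace.comap (X n) inferInstance] := by
  classical
  have hmle : MeasurableSpace.comap (X n) inferInstance ≤ (inferInstance : MeasurableSpace Ω) :=
    (hm n).comap_le
  have hind : Measurable (fun ω => Set.indicator {b} (fun _ => (1 : ℝ)) (X (n + 1) ω)) :=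
    (measurable_const.indicator (measurableSet_singleton b)).comp (hm (n + 1))
  have hindbd : ∀ ω, |Set.indicator {b} (fun _ => (1 : ℝ)) (X (n + 1) ω)| ≤ 1 := by
    intro ω
    by_cases hb : X (n + 1) ω ∈ ({b} : Set ℝ) <;> simp [Set.indicator, hb]
  have hintf : Integrable (fun ω => Set.indicator {b} (fun _ => (1 : ℝ)) (X (n + 1) ω)) P :=
    aux_integrable_of_bdd hind hindbd
  have hg_meas : Measurable[MeasurableSpace.comap (X n) inferInstance] fun ω => h (X n ω) :=
    hh.comp (Measurable.of_comap_le le_rfl)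
  have hintg : Integrable (fun ω => h (X n ω)) P := by
    refine aux_integrable_of_bdd (hh.comp (hm n)) (C := max (|h (-1)|) (max (|h 0|) (|h 1|))) ?_
    intro ω
    rcases aux_val_cases hval n ω with hc | hc | hc <;> rw [hc]
    · exact le_max_left _ _
    · exact le_trans (le_max_left _ _) (le_max_right _ _)
    · exact le_trans (le_max_right _ _) (le_max_right _ _)
  refine (ae_eq_condExp_of_forall_setIntegral_eq hmle hintf
    (fun s _ _ => hintg.integrableOn) ?_ (StronglyMeasurable.aestronglyMeasurable (Measurable.stronglyMeasurable hg_meas)))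
  rintro s ⟨A, hA, rfl⟩ -
  -- decompose the preimage into atoms
  have hdecomp : X n ⁻¹' A = ⋃ a ∈ (({-1, 0, 1} : Finset ℝ).filter (· ∈ A)), X n ⁻¹' {a} := by
    ext ω
    simp only [Set.mem_preimage, Set.mem_iUnion, Finset.mem_filter, Finset.mem_insert,
      Finset.mem_singleton, Set.mem_singleton_iff, exists_prop]
    constructor
    · intro hωA
      exact ⟨X n ω, ⟨aux_val_cases hval n ω, hωA⟩, rfl⟩
    · rintro ⟨a, ⟨-, haA⟩, hXa⟩
      rw [hXa]; exact haA
  have hmeaspre : ∀ a : ℝ, MeasurableSet (X n ⁻¹' {a}) :=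
    fun a => (hm n) (measurableSet_singleton a)
  have hdisj : Set.Pairwise ↑(({-1, 0, 1} : Finset ℝ).filter (· ∈ A))
      (Function.onFun Disjoint fun a => X n ⁻¹' {a}) := by
    intro a _ a' _ hne
    refine Set.disjoint_left.mpr fun ω hω hω' => hne ?_
    simp only [Set.mem_preimage, Set.mem_singleton_iff] at hω hω'
    rw [← hω, ← hω']
  have hterm : ∀ a : ℝ, a = -1 ∨ a = 0 ∨ a = 1 →
      ∫ ω in X n ⁻¹' {a}, h (X n ω) ∂P
        = ∫ ω in X n ⁻¹' {a},
            Set.indicator {b} (fun _ => (1 : ℝ)) (X (n + 1) ω) ∂P := by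
    intro a ha
    have hL : ∫ ω in X n ⁻¹' {a}, h (X n ω) ∂P = h a * (P (X n ⁻¹' {a})).toReal := by
      have hcg : ∀ ω ∈ X n ⁻¹' {a}, h (X n ω) = h a := by
        intro ω hω
        have hXa : X n ω = a := hω
        rw [hXa]
      rw [setIntegral_congr_fun (hmeaspre a) hcg, setIntegral_const, smul_eq_mul, mul_comm, measureReal_def]
    have hR : ∫ ω in X n ⁻¹' {a},
        Set.indicator {b} (fun _ => (1 : ℝ)) (X (n + 1) ω) ∂P
        = (P (X n ⁻¹' {a} ∩ X (n + 1) ⁻¹' {b})).toReal := by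
      have hpt : ∀ ω, Set.indicator {b} (fun _ => (1 : ℝ)) (X (n + 1) ω)
          = Set.indicator (X (n + 1) ⁻¹' {b}) (fun _ => (1 : ℝ)) ω := by
        intro ω
        by_cases hb : X (n + 1) ω ∈ ({b} : Set ℝ)
        · rw [Set.indicator_of_mem hb,
            Set.indicator_of_mem (show ω ∈ X (n + 1) ⁻¹' {b} from hb)]
        · rw [Set.indicator_of_notMem hb,
            Set.indicator_of_notMem (show ω ∉ X (n + 1) ⁻¹' {b} from hb)]
      simp_rw [hpt]
      rw [setIntegral_indicator (hm (n + 1) (measurableSet_singleton b))]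
      rw [setIntegral_const, smul_eq_mul, mul_one, measureReal_def]
    rw [hL, hR, hkey a ha]
  rw [hdecomp,
    integral_biUnion_finset _ (fun a _ => hmeaspre a) hdisj (fun a _ => hintg.integrableOn),
    integral_biUnion_finset _ (fun a _ => hmeaspre a) hdisj (fun a _ => hintf.integrableOn)]
  refine Finset.sum_congr rfl fun a ha => ?_
  rw [Finset.mem_filter, Finset.mem_insert, Finset.mem_insert, Finset.mem_singleton] at ha
  exact hterm a ha.1

end Aux2

section Aux3
variable {Ω : Type*} [MeasurableSpace Ω] {P : Measure Ω} [IsProbabilityMeasure P]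
  {X : ℤ → Ω → ℝ}

lemma aux_integrable_mul_comp (hm : ∀ k, Measurable (X k))
    (hval : ∀ k ω, X k ω ∈ ({-1, 0, 1} : Set ℝ)) (k n : ℤ) {h : ℝ → ℝ}
    (hh : Measurable h) : Integrable (fun ω => X k ω * h (X n ω)) P := by
  refine aux_integrable_of_bdd ((hm k).mul (hh.comp (hm n)))
    (C := max (|h (-1)|) (max (|h 0|) (|h 1|))) fun ω => ?_
  rw [abs_mul]
  have h1 : |X k ω| ≤ 1 := aux_abs_le hval k ω
  have h2 : |h (X n ω)| ≤ max (|h (-1)|) (max (|h 0|) (|h 1|)) := by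
    rcases aux_val_cases hval n ω with hc | hc | hc <;> rw [hc]
    · exact le_max_left _ _
    · exact le_trans (le_max_left _ _) (le_max_right _ _)
    · exact le_trans (le_max_right _ _) (le_max_right _ _)
  nlinarith [abs_nonneg (X k ω), abs_nonneg (h (X n ω))]

lemma aux_int_mul_ind (hmk : IsMarkovChain P X) (hm : ∀ k, Measurable (X k))
    (hval : ∀ k ω, X k ω ∈ ({-1, 0, 1} : Set ℝ)) (k n : ℤ) (hk : k ≤ n) (b : ℝ)
    (h : ℝ → ℝ) (hh : Measurable h)
    (hkey : ∀ a : ℝ, a = -1 ∨ a = 0 ∨ a = 1 →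
      h a * (P (X n ⁻¹' {a})).toReal
        = (P (X n ⁻¹' {a} ∩ X (n + 1) ⁻¹' {b})).toReal) :
    ∫ ω, X k ω * Set.indicator {b} (fun _ => (1 : ℝ)) (X (n + 1) ω) ∂P
      = ∫ ω, X k ω * h (X n ω) ∂P := by
  have hmle : (⨆ k : {k : ℤ // k ≤ n}, MeasurableSpace.comap (X (k : ℤ)) inferInstance)
      ≤ (inferInstance : MeasurableSpace Ω) :=
    iSup_le fun k => (hm (k : ℤ)).comap_le
  have hXk : Measurable[⨆ k : {k : ℤ // k ≤ n},
      MeasurableSpace.comap (X (k : ℤ)) inferInstance] (X k) :=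
    Measurable.of_comap_le
      (le_iSup (fun k : {k : ℤ // k ≤ n} =>
        MeasurableSpace.comap (X (k : ℤ)) inferInstance) ⟨k, hk⟩)
  have hgmeas : Measurable (fun ω => Set.indicator {b} (fun _ => (1 : ℝ)) (X (n + 1) ω)) :=
    (measurable_const.indicator (measurableSet_singleton b)).comp (hm (n + 1))
  have hgbd : ∀ ω, |Set.indicator {b} (fun _ => (1 : ℝ)) (X (n + 1) ω)| ≤ 1 := by
    intro ω
    by_cases hb : X (n + 1) ω ∈ ({b} : Set ℝ)
    · rw [Set.indicator_of_mem hb]; norm_num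
    · rw [Set.indicator_of_notMem hb]; norm_num
  have hintg : Integrable (fun ω => Set.indicator {b} (fun _ => (1 : ℝ)) (X (n + 1) ω)) P :=
    aux_integrable_of_bdd hgmeas hgbd
  have hintXg : Integrable
      (X k * fun ω => Set.indicator {b} (fun _ => (1 : ℝ)) (X (n + 1) ω)) P := by
    refine aux_integrable_of_bdd ((hm k).mul hgmeas) (C := 1) fun ω => ?_
    have h1 := aux_abs_le hval k ω
    have h2 := hgbd ω
    calc |(X k * fun ω => Set.indicator {b} (fun _ => (1 : ℝ)) (X (n + 1) ω)) ω|
        = |X k ω| * |Set.indicator {b} (fun _ => (1 : ℝ)) (X (n + 1) ω)| := abs_mul _ _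
      _ ≤ 1 := by
          nlinarith [abs_nonneg (X k ω),
            abs_nonneg (Set.indicator {b} (fun _ => (1 : ℝ)) (X (n + 1) ω))]
  have hpull : P[X k * (fun ω => Set.indicator {b} (fun _ => (1 : ℝ)) (X (n + 1) ω))|
        ⨆ k : {k : ℤ // k ≤ n}, MeasurableSpace.comap (X (k : ℤ)) inferInstance]
      =ᵐ[P] fun ω => X k ω *
        (P[(fun ω => Set.indicator {b} (fun _ => (1 : ℝ)) (X (n + 1) ω))|
          ⨆ k : {k : ℤ // k ≤ n}, MeasurableSpace.comap (X (k : ℤ)) inferInstance]) ω :=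
    condExp_mul_of_stronglyMeasurable_left hXk.stronglyMeasurable hintXg hintg
  have hmarkov := hmk n {b} (measurableSet_singleton b)
  have hce := aux_condexp_ind hm hval n b h hh hkey
  calc ∫ ω, X k ω * Set.indicator {b} (fun _ => (1 : ℝ)) (X (n + 1) ω) ∂P
      = ∫ ω, (P[X k * (fun ω => Set.indicator {b} (fun _ => (1 : ℝ)) (X (n + 1) ω))|
          ⨆ k : {k : ℤ // k ≤ n}, MeasurableSpace.comap (X (k : ℤ)) inferInstance]) ω ∂P :=
        (integral_condExp hmle).symm
    _ = ∫ ω, X k ω * h (X n ω) ∂P := by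
        refine integral_congr_ae (hpull.trans ?_)
        filter_upwards [hmarkov, hce] with ω h1 h2
        rw [h1, ← h2]

lemma aux_corr_step {ε θ : ℝ} (hε : 0 < ε ∧ ε ≤ 1 / 9) (hθ : 0 < θ ∧ θ ≤ 1 / 9)
    (hX : CondH P X ε θ) (k n : ℤ) (hk : k ≤ n) :
    ∫ ω, X k ω * X (n + 1) ω ∂P = (1 - θ) * ∫ ω, X k ω * X n ω ∂P := by
  obtain ⟨hstat, hmk, hm, hval, hP0, hPm, hPp, hc00, hc0m, hc0p, hcmm, hcpp, hcm0,
    hcp0, hcmp, hcpm⟩ := hX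
  have hε1 : (0 : ℝ) < 1 - ε := by linarith [hε.2]
  have hθ1 : (0 : ℝ) ≤ 1 - θ := by linarith [hθ.2]
  have hts : (0 : ℝ) ≤ θ / (1 - ε) * ε / 2 :=
    div_nonneg (mul_nonneg (div_nonneg hθ.1.le hε1.le) hε.1.le) (by norm_num)
  set h₁ : ℝ → ℝ := fun x => if x = 1 then 1 - θ else if x = -1 then 0
    else θ / (1 - ε) * ε / 2 with h₁def
  set h₂ : ℝ → ℝ := fun x => if x = 1 then 0 else if x = -1 then 1 - θ
    else θ / (1 - ε) * ε / 2 with h₂def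
  have hh₁ : Measurable h₁ :=
    Measurable.ite (measurableSet_singleton 1) measurable_const
      (Measurable.ite (measurableSet_singleton (-1)) measurable_const measurable_const)
  have hh₂ : Measurable h₂ :=
    Measurable.ite (measurableSet_singleton 1) measurable_const
      (Measurable.ite (measurableSet_singleton (-1)) measurable_const measurable_const)
  -- marginal values
  have hmargR : ∀ (a d : ℝ), P {ω | X 0 ω = a} = ENNReal.ofReal d → 0 ≤ d →
      (P (X n ⁻¹' {a})).toReal = d := by
    intro a d hPa hd
    have h1 : P (X n ⁻¹' {a}) = P {ω | X 0 ω = a} := aux_marg hstat hm n a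
    rw [h1, hPa, ENNReal.toReal_ofReal hd]
  -- joint values
  have hinter : ∀ (a b c d : ℝ), 0 ≤ c →
      ProbabilityTheory.cond P {ω | X 0 ω = a} {ω | X 1 ω = b} = ENNReal.ofReal c →
      P {ω | X 0 ω = a} = ENNReal.ofReal d → 0 < d →
      (P (X n ⁻¹' {a} ∩ X (n + 1) ⁻¹' {b})).toReal = d * c := by
    intro a b c d hc hcond hPa hd
    have h1 : P (X n ⁻¹' {a} ∩ X (n + 1) ⁻¹' {b})
        = P ({ω | X 0 ω = a} ∩ {ω | X 1 ω = b}) := aux_pair hstat hm n a b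
    have h2 : P ({ω | X 0 ω = a} ∩ {ω | X 1 ω = b})
        = ENNReal.ofReal d * ENNReal.ofReal c :=
      aux_inter_eq ((hm 0) (measurableSet_singleton a)) hcond hPa hd
    rw [h1, h2, ENNReal.toReal_mul, ENNReal.toReal_ofReal hd.le, ENNReal.toReal_ofReal hc]
  have hem2 : (0:ℝ) < ε / 2 := by linarith [hε.1]
  have hkey₁ : ∀ a : ℝ, a = -1 ∨ a = 0 ∨ a = 1 →
      h₁ a * (P (X n ⁻¹' {a})).toReal
        = (P (X n ⁻¹' {a} ∩ X (n + 1) ⁻¹' {(1:ℝ)})).toReal := by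
    rintro a (rfl | rfl | rfl)
    · rw [hmargR (-1) (ε/2) hPm hem2.le,
        hinter (-1) 1 0 (ε/2) le_rfl (by rw [ENNReal.ofReal_zero]; exact hcmp) hPm hem2]
      norm_num [h₁def]
    · rw [hmargR 0 (1-ε) hP0 hε1.le,
        hinter 0 1 ((θ / (1 - ε)) * ε / 2) (1-ε) hts hc0p hP0 hε1]
      norm_num [h₁def]
      ring
    · rw [hmargR 1 (ε/2) hPp hem2.le,
        hinter 1 1 (1-θ) (ε/2) hθ1 hcpp hPp hem2]
      norm_num [h₁def]
      ring
  have hkey₂ : ∀ a : ℝ, a = -1 ∨ a = 0 ∨ a = 1 →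
      h₂ a * (P (X n ⁻¹' {a})).toReal
        = (P (X n ⁻¹' {a} ∩ X (n + 1) ⁻¹' {(-1:ℝ)})).toReal := by
    rintro a (rfl | rfl | rfl)
    · rw [hmargR (-1) (ε/2) hPm hem2.le,
        hinter (-1) (-1) (1-θ) (ε/2) hθ1 hcmm hPm hem2]
      norm_num [h₂def]
      ring
    · rw [hmargR 0 (1-ε) hP0 hε1.le,
        hinter 0 (-1) ((θ / (1 - ε)) * ε / 2) (1-ε) hts hc0m hP0 hε1]
      norm_num [h₂def]
      ring
    · rw [hmargR 1 (ε/2) hPp hem2.le,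
        hinter 1 (-1) 0 (ε/2) le_rfl (by rw [ENNReal.ofReal_zero]; exact hcpm) hPp hem2]
      norm_num [h₂def]
  -- pointwise decomposition of X (n+1)
  have hpt : ∀ ω, X (n + 1) ω
      = Set.indicator {(1:ℝ)} (fun _ => (1:ℝ)) (X (n+1) ω)
        - Set.indicator {(-1:ℝ)} (fun _ => (1:ℝ)) (X (n+1) ω) := by
    intro ω
    rcases aux_val_cases hval (n+1) ω with hc | hc | hc <;> rw [hc] <;>
      norm_num [Set.indicator_apply]
  have hintb : ∀ b : ℝ,
      Integrable (fun ω => X k ω * Set.indicator {b} (fun _ => (1:ℝ)) (X (n+1) ω)) P := by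
    intro b
    refine aux_integrable_of_bdd
      ((hm k).mul ((measurable_const.indicator (measurableSet_singleton b)).comp (hm (n+1))))
      (C := 1) fun ω => ?_
    have h1 := aux_abs_le hval k ω
    have h2 : |Set.indicator {b} (fun _ => (1:ℝ)) (X (n+1) ω)| ≤ 1 := by
      by_cases hb : X (n + 1) ω ∈ ({b} : Set ℝ)
      · rw [Set.indicator_of_mem hb]; norm_num
      · rw [Set.indicator_of_notMem hb]; norm_num
    rw [abs_mul]
    nlinarith [abs_nonneg (X k ω),
      abs_nonneg (Set.indicator {b} (fun _ => (1:ℝ)) (X (n+1) ω))]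
  have hfe : (fun ω => X k ω * X (n + 1) ω)
      = fun ω => X k ω * Set.indicator {(1:ℝ)} (fun _ => (1:ℝ)) (X (n+1) ω)
          - X k ω * Set.indicator {(-1:ℝ)} (fun _ => (1:ℝ)) (X (n+1) ω) :=
    funext fun ω => by conv_lhs => rw [hpt ω, mul_sub]
  have hfe2 : (fun ω => X k ω * h₁ (X n ω) - X k ω * h₂ (X n ω))
      = fun ω => (1 - θ) * (X k ω * X n ω) := by
    funext ω
    rcases aux_val_cases hval n ω with hc | hc | hc <;> rw [hc] <;>
      simp only [h₁def, h₂def] <;> norm_num <;> ring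
  rw [hfe, integral_sub (hintb 1) (hintb (-1)),
    aux_int_mul_ind hmk hm hval k n hk 1 h₁ hh₁ hkey₁,
    aux_int_mul_ind hmk hm hval k n hk (-1) h₂ hh₂ hkey₂,
    ← integral_sub (aux_integrable_mul_comp hm hval k n hh₁)
      (aux_integrable_mul_comp hm hval k n hh₂), hfe2, integral_const_mul]

end Aux3

section Aux4
variable {Ω : Type*} [MeasurableSpace Ω] {P : Measure Ω} [IsProbabilityMeasure P]
  {X : ℤ → Ω → ℝ} {ε θ : ℝ}

lemma aux_corr_val (hε : 0 < ε ∧ ε ≤ 1 / 9) (hθ : 0 < θ ∧ θ ≤ 1 / 9)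
    (hX : CondH P X ε θ) : ∀ m : ℕ,
    ∫ ω, X 1 ω * X (1 + (m : ℤ)) ω ∂P = ε * (1 - θ) ^ m := by
  obtain ⟨hstat, hmk, hm, hval, hP0, hPm, hPp, _⟩ := hX
  intro m
  induction m with
  | zero =>
    simp only [Nat.cast_zero, add_zero, pow_zero, mul_one]
    have hsq : (fun ω => X 1 ω * X 1 ω)
        = fun ω => Set.indicator (X 1 ⁻¹' {(1:ℝ)}) (fun _ => (1:ℝ)) ω
            + Set.indicator (X 1 ⁻¹' {(-1:ℝ)}) (fun _ => (1:ℝ)) ω := by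
      funext ω
      rcases aux_val_cases hval 1 ω with hc | hc | hc <;>
        simp [Set.indicator_apply, Set.mem_preimage, hc] <;> norm_num
    have hind : ∀ b : ℝ,
        Integrable (Set.indicator (X 1 ⁻¹' {b}) (fun _ => (1:ℝ))) P := by
      intro b
      refine aux_integrable_of_bdd
        (measurable_const.indicator ((hm 1) (measurableSet_singleton b))) (C := 1) fun ω => ?_
      by_cases hb : ω ∈ X 1 ⁻¹' {b}
      · rw [Set.indicator_of_mem hb]; norm_num
      · rw [Set.indicator_of_notMem hb]; norm_num
    rw [hsq, integral_add (hind 1) (hind (-1)),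
      integral_indicator_const (1:ℝ) ((hm 1) (measurableSet_singleton (1:ℝ))),
      integral_indicator_const (1:ℝ) ((hm 1) (measurableSet_singleton (-1:ℝ)))]
    have h1 : P (X 1 ⁻¹' {(1:ℝ)}) = ENNReal.ofReal (ε / 2) := by
      rw [show X 1 ⁻¹' {(1:ℝ)} = {ω | X 1 ω = 1} from rfl, aux_marg hstat hm 1 1, hPp]
    have h2 : P (X 1 ⁻¹' {(-1:ℝ)}) = ENNReal.ofReal (ε / 2) := by
      rw [show X 1 ⁻¹' {(-1:ℝ)} = {ω | X 1 ω = -1} from rfl, aux_marg hstat hm 1 (-1), hPm]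
    rw [measureReal_def, measureReal_def, h1, h2, ENNReal.toReal_ofReal (by linarith [hε.1])]
    simp only [smul_eq_mul, mul_one]
    linarith
  | succ m ih =>
    have hidx : (1 : ℤ) + ((m : ℕ) + 1 : ℕ) = (1 + (m : ℤ)) + 1 := by push_cast; ring
    rw [hidx, aux_corr_step hε hθ ⟨hstat, hmk, hm, hval, hP0, hPm, hPp, ‹_›⟩ 1 (1 + (m : ℤ))
      (by omega), ih]
    ring

lemma aux_corr_dist (hε : 0 < ε ∧ ε ≤ 1 / 9) (hθ : 0 < θ ∧ θ ≤ 1 / 9)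
    (hX : CondH P X ε θ) (j l : ℤ) (hjl : j ≤ l) :
    ∫ ω, X j ω * X l ω ∂P = ε * (1 - θ) ^ ((l - j).toNat) := by
  have hcast : j + (((l - j).toNat : ℕ) : ℤ) = l := by
    rw [Int.toNat_of_nonneg (by omega)]; ring
  have := aux_prod_shift hX.1 hX.2.2.1 j ((l - j).toNat)
  rw [hcast] at this
  rw [this, aux_corr_val hε hθ hX]
end Aux4

section Aux5

/-- The increments of `n ↦ E[S_n^2]`. -/
def auxC (ε θ : ℝ) : ℕ → ℝ := fun i => ε + 2 * ∑ m ∈ Finset.Icc 1 i, ε * (1 - θ) ^ m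

variable {Ω : Type*} [MeasurableSpace Ω] {P : Measure Ω} [IsProbabilityMeasure P]
  {X : ℤ → Ω → ℝ} {ε θ : ℝ}

lemma aux_S (hε : 0 < ε ∧ ε ≤ 1 / 9) (hθ : 0 < θ ∧ θ ≤ 1 / 9) (hX : CondH P X ε θ) :
    ∀ n : ℕ, ∫ ω, (∑ k ∈ Finset.Icc (1 : ℤ) (n : ℤ), X k ω) ^ 2 ∂P
      = ∑ i ∈ Finset.range n, auxC ε θ i := by
  have hm := hX.2.2.1
  have hval := hX.2.2.2.1
  have hprodint : ∀ j l : ℤ, Integrable (fun ω => X j ω * X l ω) P := by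
    intro j l
    refine aux_integrable_of_bdd ((hm j).mul (hm l)) (C := 1) fun ω => ?_
    have h1 := aux_abs_le hval j ω
    have h2 := aux_abs_le hval l ω
    rw [abs_mul]
    nlinarith [abs_nonneg (X j ω), abs_nonneg (X l ω)]
  intro n
  induction n with
  | zero => simp
  | succ n ih =>
    have hnot : ((n : ℤ) + 1) ∉ Finset.Icc (1 : ℤ) (n : ℤ) := by simp
    have hIcc : Finset.Icc (1 : ℤ) (((n + 1 : ℕ)) : ℤ)
        = insert ((n : ℤ) + 1) (Finset.Icc (1 : ℤ) (n : ℤ)) := by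
      push_cast
      ext x
      simp only [Finset.mem_Icc, Finset.mem_insert]
      omega
    have hsumsq : Integrable (fun ω => (∑ k ∈ Finset.Icc (1 : ℤ) (n : ℤ), X k ω) ^ 2) P := by
      refine aux_integrable_of_bdd ?_ (C := ((Finset.Icc (1 : ℤ) (n : ℤ)).card : ℝ) ^ 2) ?_
      · exact (Finset.measurable_sum _ fun k _ => hm k).pow measurable_const
      · intro ω
        have hb : |∑ k ∈ Finset.Icc (1 : ℤ) (n : ℤ), X k ω|
            ≤ ((Finset.Icc (1 : ℤ) (n : ℤ)).card : ℝ) := by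
          refine le_trans (Finset.abs_sum_le_sum_abs _ _) ?_
          calc ∑ k ∈ Finset.Icc (1 : ℤ) (n : ℤ), |X k ω|
              ≤ ∑ _k ∈ Finset.Icc (1 : ℤ) (n : ℤ), (1 : ℝ) :=
                Finset.sum_le_sum fun k _ => aux_abs_le hval k ω
            _ = ((Finset.Icc (1 : ℤ) (n : ℤ)).card : ℝ) := by simp
        have habs : |(∑ k ∈ Finset.Icc (1 : ℤ) (n : ℤ), X k ω) ^ 2|
            = |∑ k ∈ Finset.Icc (1 : ℤ) (n : ℤ), X k ω| ^ 2 := by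
          rw [abs_pow]
        rw [habs]
        have h0 : (0:ℝ) ≤ |∑ k ∈ Finset.Icc (1 : ℤ) (n : ℤ), X k ω| := abs_nonneg _
        nlinarith [hb]
    have hcrossint : ∀ k : ℤ, Integrable (fun ω => 2 * (X k ω * X ((n : ℤ) + 1) ω)) P :=
      fun k => (hprodint k _).const_mul 2
    have hcross : Integrable
        (fun ω => ∑ k ∈ Finset.Icc (1 : ℤ) (n : ℤ), 2 * (X k ω * X ((n : ℤ) + 1) ω)) P :=
      integrable_finset_sum _ fun k _ => hcrossint k
    have hlast : Integrable (fun ω => X ((n : ℤ) + 1) ω * X ((n : ℤ) + 1) ω) P := hprodint _ _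
    have hfun : (fun ω => (∑ k ∈ Finset.Icc (1 : ℤ) ((n + 1 : ℕ) : ℤ), X k ω) ^ 2)
        = fun ω => (∑ k ∈ Finset.Icc (1 : ℤ) (n : ℤ), X k ω) ^ 2
          + ((∑ k ∈ Finset.Icc (1 : ℤ) (n : ℤ), 2 * (X k ω * X ((n : ℤ) + 1) ω))
            + X ((n : ℤ) + 1) ω * X ((n : ℤ) + 1) ω) := by
      funext ω
      rw [hIcc, Finset.sum_insert hnot]
      have h2 : ∑ k ∈ Finset.Icc (1 : ℤ) (n : ℤ), 2 * (X k ω * X ((n : ℤ) + 1) ω)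
          = 2 * ((∑ k ∈ Finset.Icc (1 : ℤ) (n : ℤ), X k ω) * X ((n : ℤ) + 1) ω) := by
        rw [← Finset.mul_sum, ← Finset.sum_mul]
      rw [h2]
      set a := X ((n : ℤ) + 1) ω
      set t := ∑ k ∈ Finset.Icc (1 : ℤ) (n : ℤ), X k ω
      ring
    have hterm : ∀ k ∈ Finset.Icc (1 : ℤ) (n : ℤ),
        ∫ ω, 2 * (X k ω * X ((n : ℤ) + 1) ω) ∂P
          = 2 * (ε * (1 - θ) ^ (((n : ℤ) + 1 - k).toNat)) := by
      intro k hk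
      rw [Finset.mem_Icc] at hk
      rw [integral_const_mul, aux_corr_dist hε hθ hX k ((n : ℤ) + 1) (by omega)]
    have hlastval : ∫ ω, X ((n : ℤ) + 1) ω * X ((n : ℤ) + 1) ω ∂P = ε := by
      have := aux_corr_dist hε hθ hX ((n : ℤ) + 1) ((n : ℤ) + 1) le_rfl
      simpa using this
    have hreidx : ∑ k ∈ Finset.Icc (1 : ℤ) (n : ℤ),
        2 * (ε * (1 - θ) ^ (((n : ℤ) + 1 - k).toNat))
          = 2 * ∑ m ∈ Finset.Icc 1 n, ε * (1 - θ) ^ m := by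
      rw [Finset.mul_sum]
      refine Finset.sum_bij' (fun k _ => ((n : ℤ) + 1 - k).toNat)
        (fun m _ => (n : ℤ) + 1 - (m : ℤ)) ?_ ?_ ?_ ?_ ?_ <;>
        intro a ha <;> simp only [Finset.mem_Icc] at ha ⊢ <;>
        first
          | omega
          | rfl
    have hcl : Integrable (fun ω =>
        (∑ k ∈ Finset.Icc (1 : ℤ) (n : ℤ), 2 * (X k ω * X ((n : ℤ) + 1) ω))
          + X ((n : ℤ) + 1) ω * X ((n : ℤ) + 1) ω) P := hcross.add hlast
    rw [hfun, integral_add hsumsq hcl, integral_add hcross hlast, ih,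
      integral_finset_sum _ (fun k _ => hcrossint k), Finset.sum_congr rfl hterm, hreidx,
      hlastval, Finset.sum_range_succ]
    simp only [auxC]
    ring

end Aux5


/-- Lemma 5.3(9) of the paper: under Condition `H(ε,θ)`, with
`u_n := (1/n)·E[(X_1 + ⋯ + X_n)²]`, the sequence `(u_n)` is nondecreasing and
`u_n → ε[(2/θ) − 1]`. -/
theorem stmt10 {Ω : Type*} [MeasurableSpace Ω] (P : Measure Ω) [IsProbabilityMeasure P]
    (ε θ : ℝ) (hε : 0 < ε ∧ ε ≤ 1 / 9) (hθ : 0 < θ ∧ θ ≤ 1 / 9)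
    (X : ℤ → Ω → ℝ) (hX : CondH P X ε θ) :
    (∀ n : ℕ, 0 < n →
      (1 / (n : ℝ)) * ∫ ω, (∑ k ∈ Finset.Icc (1 : ℤ) (n : ℤ), X k ω) ^ 2 ∂P ≤
        (1 / ((n : ℝ) + 1)) *
          ∫ ω, (∑ k ∈ Finset.Icc (1 : ℤ) ((n : ℤ) + 1), X k ω) ^ 2 ∂P) ∧
    Tendsto (fun n : ℕ =>
        (1 / (n : ℝ)) * ∫ ω, (∑ k ∈ Finset.Icc (1 : ℤ) (n : ℤ), X k ω) ^ 2 ∂P)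
      atTop (nhds (ε * (2 / θ - 1))) := by
  have hq0 : (0 : ℝ) ≤ 1 - θ := by linarith [hθ.2]
  have hq1 : (1 : ℝ) - θ < 1 := by linarith [hθ.1]
  have hS := aux_S hε hθ hX
  have hcmono : Monotone (auxC ε θ) := by
    intro i j hij
    simp only [auxC]
    have : ∑ m ∈ Finset.Icc 1 i, ε * (1 - θ) ^ m ≤ ∑ m ∈ Finset.Icc 1 j, ε * (1 - θ) ^ m :=
      Finset.sum_le_sum_of_subset_of_nonneg (Finset.Icc_subset_Icc_right hij)
        (fun m _ _ => mul_nonneg hε.1.le (pow_nonneg hq0 m))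
    linarith
  constructor
  · intro n hn
    have hn' : (0 : ℝ) < (n : ℝ) := by exact_mod_cast hn
    have hn1 : (0 : ℝ) < (n : ℝ) + 1 := by linarith
    have hS' := hS (n + 1)
    push_cast at hS'
    rw [hS n, hS']
    have hsum_le : ∑ i ∈ Finset.range n, auxC ε θ i ≤ (n : ℝ) * auxC ε θ n := by
      calc ∑ i ∈ Finset.range n, auxC ε θ i ≤ ∑ _i ∈ Finset.range n, auxC ε θ n :=
            Finset.sum_le_sum fun i hi => hcmono (Finset.mem_range.mp hi).le
        _ = (n : ℝ) * auxC ε θ n := by rw [Finset.sum_const, Finset.card_range, nsmul_eq_mul]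
    rw [Finset.sum_range_succ, one_div, one_div, inv_mul_eq_div, inv_mul_eq_div,
      div_le_div_iff₀ hn' hn1]

    have hexp : ∑ i ∈ Finset.range (n + 1), auxC ε θ i
        = (∑ i ∈ Finset.range n, auxC ε θ i) + auxC ε θ n := Finset.sum_range_succ _ n
    nlinarith [hsum_le]
  · -- convergence
    have hgs : HasSum (fun m : ℕ => ε * (1 - θ) ^ m) (ε * (1 - (1 - θ))⁻¹) :=
      (hasSum_geometric_of_lt_one hq0 hq1).mul_left ε
    have h1 : Tendsto (fun i : ℕ => ∑ m ∈ Finset.range i, ε * (1 - θ) ^ m) atTop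
        (𝓝 (ε * (1 - (1 - θ))⁻¹)) := hgs.tendsto_sum_nat
    have h2 : ∀ i : ℕ, ∑ m ∈ Finset.Icc 1 i, ε * (1 - θ) ^ m
        = (∑ m ∈ Finset.range (i + 1), ε * (1 - θ) ^ m) - ε := by
      intro i
      induction i with
      | zero => simp
      | succ i ih =>
        rw [Finset.sum_Icc_succ_top (by omega : 1 ≤ i + 1), Finset.sum_range_succ, ih]
        ring
    have hc_tends : Tendsto (auxC ε θ) atTop (𝓝 (ε + 2 * (ε * (1 - (1 - θ))⁻¹ - ε))) := by
      have ht1 : Tendsto (fun i : ℕ => ∑ m ∈ Finset.range (i + 1), ε * (1 - θ) ^ m) atTop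
          (𝓝 (ε * (1 - (1 - θ))⁻¹)) := h1.comp (tendsto_add_atTop_nat 1)
      have ht2 := ((ht1.sub_const ε).const_mul 2).const_add ε
      refine ht2.congr fun i => ?_
      simp only [auxC, h2 i]
    have hL : ε + 2 * (ε * (1 - (1 - θ))⁻¹ - ε) = ε * (2 / θ - 1) := by
      have hθ' : θ ≠ 0 := ne_of_gt hθ.1
      have h3 : (1 : ℝ) - (1 - θ) = θ := by ring
      rw [h3]
      field_simp
      ring
    rw [hL] at hc_tends
    have hcesaro := hc_tends.cesaro
    refine hcesaro.congr fun n => ?_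
    rw [← one_div, ← hS n]
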